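/- Let H ⊂ V = E ⊕ E* (dim V = 2N, N and p even) be the maximal isotropic subspace spanned by e_1,…,e_p together with g_j = f_j + Σ_{k=p+1}^{N} α_{kj} e_k for j = p+1,…,N, where A = (α_{kj}) is skew-symmetric of size N−p. Then the spinor a_H = Σ_{I ⊂ {p+1,…,N}} Pf(A_I) e_{[p]} ∧ e_I (sum over even-size index sets I, Pf(A_I) the Pfaffian of the submatrix of A with rows and columns in I, e_∅ := 1) satisfies h · a_H = 0 for every h ∈ H. -/

import Mathlib

/- Formalization of a statement about spinor varieties (Galgano, arXiv:2302.05295). -/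

noncomputable section
open CliffordAlgebra

/-- The model for the maximal isotropic subspace `E`. -/
abbrev Evec (N : ℕ) := Fin N → ℂ

/-- The model for `V = E ⊕ E^∨`: a pair `(e, f)` represents `∑ eᵢ • eᵢ + ∑ fᵢ • fᵢ`. -/
abbrev Vsp (N : ℕ) := (Fin N → ℂ) × (Fin N → ℂ)

/-- The exterior algebra `⋀ E` hosting the (sums of half-) spin representations. -/
abbrev ExtE (N : ℕ) := ExteriorAlgebra ℂ (Evec N)

/-- `b ↦ (a ↦ ∑ aᵢ bᵢ)`, identifying `E` with its dual. -/
def toDualMap (N : ℕ) : Evec N →ₗ[ℂ] Module.Dual ℂ (Evec N) where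
  toFun b := ∑ i, b i • LinearMap.proj i
  map_add' x y := by simp [add_smul, Finset.sum_add_distrib]
  map_smul' c x := by simp [smul_smul, Finset.smul_sum]

/-- Clifford multiplication on the spinor module `⋀E` by an element
`v = (e, f) ∈ V = E ⊕ E^∨`: wedge by `e` plus contraction by `f`; bundled as a
linear map in `v`, for a fixed spinor `x`.  `psi x v = v ⋅ x`. -/
def psi {N : ℕ} (x : ExtE N) : Vsp N →ₗ[ℂ] ExtE N :=
  (LinearMap.mulRight ℂ x).comp ((ExteriorAlgebra.ι ℂ).comp (LinearMap.fst ℂ _ _)) +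
  ((CliffordAlgebra.contractLeft (Q := (0 : QuadraticForm ℂ (Evec N)))).flip x).comp
    ((toDualMap N).comp (LinearMap.snd ℂ _ _))

/-- The wedge product `e_I = e_{i₁} ∧ ⋯ ∧ e_{i_k}` over the sorted index set `I`. -/
def eI {N : ℕ} (I : Finset (Fin N)) : ExtE N :=
  ((I.sort (· ≤ ·)).map (fun i => ExteriorAlgebra.ι ℂ (Pi.single i 1))).prod

/-- The Pfaffian of an `n × n` complex matrix (intended for skew-symmetric matrices
of even size): `(1/(2^m m!)) ∑_σ sgn(σ) ∏ A_{σ(2i) σ(2i+1)}` with `m = n/2`. -/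
def pfaffian {n : ℕ} (A : Matrix (Fin n) (Fin n) ℂ) : ℂ :=
  (1 / ((2 : ℂ) ^ (n / 2) * (Nat.factorial (n / 2)))) *
    ∑ σ : Equiv.Perm (Fin n), ((Equiv.Perm.sign σ : ℤ) : ℂ) *
      ∏ i : Fin (n / 2),
        A (σ ⟨2 * i.1, by have := i.isLt; omega⟩) (σ ⟨2 * i.1 + 1, by have := i.isLt; omega⟩)

/-- The Pfaffian of the submatrix of `A` whose rows and columns are indexed by `I`. -/
def pfSub {N : ℕ} (A : Matrix (Fin N) (Fin N) ℂ) (I : Finset (Fin N)) : ℂ :=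
  pfaffian (A.submatrix (fun i => I.orderEmbOfFin rfl i) (fun i => I.orderEmbOfFin rfl i))

/-- The pure spinor `a_H = ∑_{I ⊆ {p+1,…,N}, |I| even} Pf(A_I) e_{[p]} ∧ e_I`
attached to the data `(p, α)`. -/
def aH (N p : ℕ) (α : Matrix (Fin N) (Fin N) ℂ) : ExtE N :=
  ∑ I : Finset (Fin N),
    if Even I.card ∧ ∀ i ∈ I, p ≤ i.1 then
      pfSub α I • (eI (Finset.univ.filter fun k : Fin N => k.1 < p) * eI I)
    else 0


namespace SpinAux
open CliffordAlgebra
variable {N : ℕ}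

def ee (i : Fin N) : ExtE N := ExteriorAlgebra.ι ℂ (Pi.single i 1)

def PP (n : ℕ) (g : Fin n → Fin N) : ExtE N :=
  ExteriorAlgebra.ιMulti ℂ n fun i => Pi.single (g i) 1

def CC (α : Matrix (Fin N) (Fin N) ℂ) : (m : ℕ) → (Fin (2*m) → Fin N) → ℂ
  | 0, _ => 1
  | (m+1), g => α (g ⟨0, by omega⟩) (g ⟨1, by omega⟩) * CC α m (fun i => g i.succ.succ)

def WW (α : Matrix (Fin N) (Fin N) ℂ) : ExtE N := ∑ k, ∑ l, α k l • (ee k * ee l)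

local notation "D" => contractLeft (Q := (0:QuadraticForm ℂ (Evec N)))

lemma anticomm (x y : Evec N) :
    ExteriorAlgebra.ι ℂ x * ExteriorAlgebra.ι ℂ y
      = -(ExteriorAlgebra.ι ℂ y * ExteriorAlgebra.ι ℂ x) :=
  eq_neg_of_add_eq_zero_left (ExteriorAlgebra.ι_add_mul_swap x y)

lemma PP_cons (k : Fin N) {n : ℕ} (g : Fin n → Fin N) :
    PP (n+1) (Fin.cons k g) = ee k * PP n g := by
  rw [PP, ExteriorAlgebra.ιMulti_succ_apply]; rfl

lemma CC_cons (α : Matrix (Fin N) (Fin N) ℂ) (m : ℕ) (k l : Fin N) (g : Fin (2*m) → Fin N) :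
    CC α (m+1) (Fin.cons k (Fin.cons l g) : Fin (2*m+1+1) → Fin N) = α k l * CC α m g := by
  rw [CC]; rfl

lemma CC_eq_prod (α : Matrix (Fin N) (Fin N) ℂ) (m : ℕ) (g : Fin (2*m) → Fin N) :
    CC α m g = ∏ i : Fin m,
      α (g ⟨2*i.1, by have := i.isLt; omega⟩) (g ⟨2*i.1+1, by have := i.isLt; omega⟩) := by
  induction m with
  | zero => simp [CC]
  | succ m ih =>
    rw [Fin.prod_univ_succ, CC, ih]
    show _ * _ = _ * _
    congr 1

lemma PP_eq_zero {n : ℕ} {g : Fin n → Fin N} (hg : ¬ Function.Injective g) :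
    PP n g = 0 := by
  simp only [Function.Injective, not_forall] at hg
  obtain ⟨i, j, hij, hne⟩ := hg
  exact AlternatingMap.map_eq_zero_of_eq _ _ (by rw [hij]) hne

lemma PP_perm {n : ℕ} (g : Fin n → Fin N) (σ : Equiv.Perm (Fin n)) :
    PP n (g ∘ σ) = ((Equiv.Perm.sign σ : ℤ) : ℂ) • PP n g := by
  have := AlternatingMap.map_perm (ExteriorAlgebra.ιMulti ℂ n)
    (fun i => (Pi.single (g i) 1 : Evec N)) σ
  unfold PP
  rw [show (fun i => (Pi.single ((g ∘ σ) i) 1 : Evec N)) =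
      (fun i => (Pi.single (g i) 1 : Evec N)) ∘ σ from rfl, this]
  rcases Int.units_eq_one_or (Equiv.Perm.sign σ) with h | h <;> simp [h]

lemma eI_eq_PP (I : Finset (Fin N)) {k : ℕ} (h : I.card = k) :
    eI I = PP k (fun i => I.orderEmbOfFin h i) := by
  rw [eI, PP, ExteriorAlgebra.ιMulti_apply]
  congr 1
  apply List.ext_getElem
  · simp [h]
  · intro t h1 h2
    simp only [List.getElem_map, List.getElem_ofFn]
    rw [Finset.orderEmbOfFin_apply]
    simp [Fin.getElem_fin]

lemma pf_sum {m : ℕ} (A : Matrix (Fin (2*m)) (Fin (2*m)) ℂ) :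
    ∑ σ : Equiv.Perm (Fin (2*m)), ((Equiv.Perm.sign σ : ℤ) : ℂ) *
      ∏ i : Fin m, A (σ ⟨2*i.1, by have := i.isLt; omega⟩) (σ ⟨2*i.1+1, by have := i.isLt; omega⟩)
    = ((2:ℂ)^m * m.factorial) * pfaffian A := by
  have h2 : (2*m)/2 = m := by omega
  have hprod : ∀ σ : Equiv.Perm (Fin (2*m)),
      (∏ i : Fin ((2*m)/2), A (σ ⟨2*i.1, by have := i.isLt; omega⟩) (σ ⟨2*i.1+1, by have := i.isLt; omega⟩))
      = ∏ i : Fin m, A (σ ⟨2*i.1, by have := i.isLt; omega⟩) (σ ⟨2*i.1+1, by have := i.isLt; omega⟩) := by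
    intro σ
    refine Fintype.prod_equiv (finCongr h2) _ _ fun i => ?_
    congr 1
  rw [pfaffian]
  simp_rw [hprod]
  rw [← mul_assoc, h2]
  have hne : ((2:ℂ)^m * m.factorial) ≠ 0 := by
    apply mul_ne_zero (pow_ne_zero _ two_ne_zero)
    exact_mod_cast Nat.cast_ne_zero.mpr m.factorial_ne_zero
  field_simp
  exact (mul_div_cancel_right₀ _ ((Nat.cast_ne_zero (R := ℂ)).mpr m.factorial_ne_zero)).symm

lemma pfSub_eq (α : Matrix (Fin N) (Fin N) ℂ) (I : Finset (Fin N)) {k : ℕ} (h : I.card = k) :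
    pfaffian (α.submatrix (fun i => I.orderEmbOfFin h i) (fun i => I.orderEmbOfFin h i))
      = pfSub α I := by
  subst h; rfl

lemma pfSub_zero (α : Matrix (Fin N) (Fin N) ℂ) {I : Finset (Fin N)} (hI : Even I.card)
    {i : Fin N} (hi : i ∈ I) (hrow : ∀ y, α i y = 0) (hcol : ∀ x, α x i = 0) :
    pfSub α I = 0 := by
  obtain ⟨c, hc⟩ := hI
  have hc2 : I.card = 2*(I.card/2) := by omega
  rw [pfSub, pfaffian]
  apply mul_eq_zero_of_right
  apply Finset.sum_eq_zero
  intro σ _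
  apply mul_eq_zero_of_right
  set pos : Fin I.card := (I.orderIsoOfFin rfl).symm ⟨i, hi⟩ with hpos
  have hmonopos : I.orderEmbOfFin rfl pos = i := by
    rw [← Finset.coe_orderIsoOfFin_apply, hpos]
    simp
  set τ : Fin I.card := σ.symm pos with hτ
  have hτlt : τ.1 < I.card := τ.isLt
  rcases Nat.even_or_odd τ.1 with ⟨q, hqe⟩ | ⟨q, hqe⟩
  · have hq : τ.1/2 < I.card/2 := by omega
    apply Finset.prod_eq_zero (Finset.mem_univ (⟨τ.1/2, hq⟩ : Fin (I.card/2)))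
    have : (⟨2*(τ.1/2), by omega⟩ : Fin I.card) = τ := Fin.ext (by simp; omega)
    rw [this, Equiv.apply_symm_apply]
    show α (I.orderEmbOfFin rfl pos) _ = 0
    rw [hmonopos, hrow]
  · have hq : τ.1/2 < I.card/2 := by omega
    apply Finset.prod_eq_zero (Finset.mem_univ (⟨τ.1/2, hq⟩ : Fin (I.card/2)))
    have : (⟨2*(τ.1/2)+1, by omega⟩ : Fin I.card) = τ := Fin.ext (by simp; omega)
    rw [this, Equiv.apply_symm_apply]
    show α _ (I.orderEmbOfFin rfl pos) = 0
    rw [hmonopos, hcol]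

lemma W_pow (α : Matrix (Fin N) (Fin N) ℂ) (m : ℕ) :
    WW α ^ m = ∑ g : Fin (2*m) → Fin N, CC α m g • PP (2*m) g := by
  induction m with
  | zero =>
    rw [pow_zero]
    rw [Fintype.sum_eq_single (fun i : Fin (2*0) => i.elim0)
      (fun g h => absurd (funext fun i => i.elim0 : g = _) h)]
    simp [CC, PP, ExteriorAlgebra.ιMulti_zero_apply]
  | succ m ih =>
    rw [pow_succ', ih]
    have expand : WW α * (∑ g : Fin (2*m) → Fin N, CC α m g • PP (2*m) g)
        = ∑ x : Fin N × Fin N × (Fin (2*m) → Fin N),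
            (α x.1 x.2.1 * CC α m x.2.2) • (ee x.1 * (ee x.2.1 * PP (2*m) x.2.2)) := by
      rw [WW, Finset.sum_mul, Fintype.sum_prod_type]
      refine Finset.sum_congr rfl fun k _ => ?_
      rw [Finset.sum_mul, Fintype.sum_prod_type]
      refine Finset.sum_congr rfl fun l _ => ?_
      rw [smul_mul_assoc, Finset.mul_sum, Finset.smul_sum]
      refine Finset.sum_congr rfl fun g _ => ?_
      rw [mul_smul_comm, smul_smul, mul_assoc]
    rw [expand]
    refine Fintype.sum_equiv
      ((Equiv.refl (Fin N)).prodCongr (Fin.consEquiv fun _ => Fin N) |>.trans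
        (Fin.consEquiv fun _ => Fin N)) _ _ fun x => ?_
    obtain ⟨k, l, g⟩ := x
    show (α k l * CC α m g) • (ee k * (ee l * PP (2*m) g))
        = CC α (m+1) (Fin.cons k (Fin.cons l g)) • PP (2*(m+1)) (Fin.cons k (Fin.cons l g))
    rw [CC_cons, show PP (2*(m+1)) (Fin.cons k (Fin.cons l g)) = PP (2*m+1+1) (Fin.cons k (Fin.cons l g)) from rfl,
      PP_cons, PP_cons]

lemma W_pow_eq (α : Matrix (Fin N) (Fin N) ℂ) (m : ℕ) :
    WW α ^ m = ∑ I ∈ Finset.univ.filter (fun I : Finset (Fin N) => I.card = 2*m),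
      (((2:ℂ)^m * m.factorial) * pfSub α I) • eI I := by
  rw [W_pow]
  rw [← Finset.sum_filter_add_sum_filter_not Finset.univ (fun g : Fin (2*m) → Fin N => Function.Injective g)]
  have h0 : ∑ g ∈ Finset.univ.filter (fun g : Fin (2*m) → Fin N => ¬ Function.Injective g),
      CC α m g • PP (2*m) g = 0 :=
    Finset.sum_eq_zero fun g hg => by
      rw [PP_eq_zero (Finset.mem_filter.mp hg).2, smul_zero]
  rw [h0, add_zero]
  rw [← Finset.sum_fiberwise_of_maps_to
    (g := fun g : Fin (2*m) → Fin N => Finset.image g Finset.univ)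
    (t := Finset.univ.filter fun I : Finset (Fin N) => I.card = 2*m)
    (fun g hg => by
      have hginj := (Finset.mem_filter.mp hg).2
      simp [Finset.mem_filter, Finset.card_image_of_injective _ hginj])]
  refine Finset.sum_congr rfl fun I hI => ?_
  have hIc : I.card = 2*m := (Finset.mem_filter.mp hI).2
  have hmonoinj : Function.Injective (fun t => I.orderEmbOfFin hIc t) :=
    (I.orderEmbOfFin hIc).injective
  have himg : Finset.image (fun t => I.orderEmbOfFin hIc t) Finset.univ = I := by
    apply Finset.coe_injective
    rw [Finset.coe_image, Finset.coe_univ, Set.image_univ]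
    exact Finset.range_orderEmbOfFin I hIc
  have step : ∑ σ : Equiv.Perm (Fin (2*m)),
        CC α m ((fun t => I.orderEmbOfFin hIc t) ∘ σ) • PP (2*m) ((fun t => I.orderEmbOfFin hIc t) ∘ σ)
      = ∑ g ∈ (Finset.univ.filter fun g : Fin (2*m) → Fin N => Function.Injective g).filter
          (fun g => Finset.image g Finset.univ = I), CC α m g • PP (2*m) g := by
    refine Finset.sum_bij (fun σ _ => (fun t => I.orderEmbOfFin hIc t) ∘ σ) ?_ ?_ ?_ ?_
    · intro σ _
      simp only [Finset.mem_filter, Finset.mem_univ, true_and]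
      constructor
      · exact hmonoinj.comp σ.injective
      · have himij : Finset.image ((fun t => I.orderEmbOfFin hIc t) ∘ σ) Finset.univ
            = Finset.image (fun t => I.orderEmbOfFin hIc t) (Finset.image σ Finset.univ) :=
          Finset.image_image.symm
        rw [himij, Finset.image_univ_equiv σ, himg]
    · intro σ1 _ σ2 _ hcomp
      exact Equiv.ext fun t => hmonoinj (congrFun hcomp t)
    · intro g hg
      obtain ⟨hg1, hg2⟩ := Finset.mem_filter.mp hg
      have hginj : Function.Injective g := (Finset.mem_filter.mp hg1).2
      have hgI : ∀ t, g t ∈ I := fun t => by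
        rw [← hg2]; exact Finset.mem_image_of_mem g (Finset.mem_univ t)
      have hsinj : Function.Injective (fun t => (I.orderIsoOfFin hIc).symm ⟨g t, hgI t⟩) := by
        intro a b hab
        apply hginj
        have := congrArg (fun x => ((I.orderIsoOfFin hIc) x : Fin N)) hab
        simpa using this
      refine ⟨Equiv.ofBijective _ (Finite.injective_iff_bijective.mp hsinj), Finset.mem_univ _, ?_⟩
      funext t
      show I.orderEmbOfFin hIc ((I.orderIsoOfFin hIc).symm ⟨g t, hgI t⟩) = g t
      rw [← Finset.coe_orderIsoOfFin_apply]
      simp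
    · intro σ _; rfl
  rw [← step]
  have hPP : PP (2*m) (fun t => I.orderEmbOfFin hIc t) = eI I := (eI_eq_PP I hIc).symm
  calc ∑ σ : Equiv.Perm (Fin (2*m)),
        CC α m ((fun t => I.orderEmbOfFin hIc t) ∘ σ) • PP (2*m) ((fun t => I.orderEmbOfFin hIc t) ∘ σ)
      = ∑ σ : Equiv.Perm (Fin (2*m)),
          (((Equiv.Perm.sign σ : ℤ) : ℂ) * CC α m ((fun t => I.orderEmbOfFin hIc t) ∘ σ)) • eI I := by
        refine Finset.sum_congr rfl fun σ _ => ?_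
        rw [PP_perm, hPP, smul_smul, mul_comm]
    _ = (((2:ℂ)^m * m.factorial) * pfSub α I) • eI I := by
        rw [← Finset.sum_smul]
        congr 1
        have : ∀ σ : Equiv.Perm (Fin (2*m)),
            CC α m ((fun t => I.orderEmbOfFin hIc t) ∘ σ)
            = ∏ i : Fin m,
              (α.submatrix (fun i => I.orderEmbOfFin hIc i) (fun i => I.orderEmbOfFin hIc i))
                (σ ⟨2*i.1, by have := i.isLt; omega⟩) (σ ⟨2*i.1+1, by have := i.isLt; omega⟩) := by
          intro σ
          rw [CC_eq_prod]
          rfl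
        simp_rw [this]
        rw [pf_sum, pfSub_eq]

lemma ee_mul_list {i : Fin N} {l : List (Fin N)} (h : i ∈ l) :
    ExteriorAlgebra.ι ℂ (Pi.single i 1) * (l.map ee).prod = 0 := by
  induction l with
  | nil => simp at h
  | cons a t ih =>
    rw [List.map_cons, List.prod_cons, ← mul_assoc]
    rcases List.mem_cons.mp h with rfl | hmem
    · rw [show ExteriorAlgebra.ι ℂ (Pi.single i 1) * ee i = 0 from ExteriorAlgebra.ι_sq_zero _,
        zero_mul]
    · rw [show ExteriorAlgebra.ι ℂ (Pi.single i 1) * ee a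
          = -(ee a * ExteriorAlgebra.ι ℂ (Pi.single i 1)) from anticomm _ _]
      rw [neg_mul, mul_assoc, ih hmem, mul_zero, neg_zero]

lemma mul_list_comm (v : Evec N) (l : List (Fin N)) :
    ExteriorAlgebra.ι ℂ v * (l.map ee).prod
      = ((-1:ℂ)^l.length) • ((l.map ee).prod * ExteriorAlgebra.ι ℂ v) := by
  induction l with
  | nil => simp
  | cons a t ih =>
    rw [List.map_cons, List.prod_cons, List.length_cons, pow_succ, mul_neg_one, neg_smul]
    rw [← mul_assoc,
      show ExteriorAlgebra.ι ℂ v * ee a = -(ee a * ExteriorAlgebra.ι ℂ v) from anticomm _ _]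
    rw [neg_mul, mul_assoc, ih, mul_smul_comm]
    rw [show ee a * (List.map ee t).prod * ExteriorAlgebra.ι ℂ v
        = ee a * ((List.map ee t).prod * ExteriorAlgebra.ι ℂ v) from mul_assoc _ _ _]

lemma contract_list (d : Module.Dual ℂ (Evec N)) (l : List (Fin N))
    (hd : ∀ i ∈ l, d (Pi.single i 1) = 0) (x : ExtE N) :
    (D d) ((l.map ee).prod * x)
      = ((-1:ℂ)^l.length) • ((l.map ee).prod * (D d) x) := by
  induction l with
  | nil => simp
  | cons a t ih =>
    rw [List.map_cons, List.prod_cons, mul_assoc]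
    rw [show ee a = ExteriorAlgebra.ι ℂ (Pi.single a 1) from rfl]
    rw [contractLeft_ι_mul]
    rw [hd a List.mem_cons_self, zero_smul, zero_sub]
    rw [ih (fun i hi => hd i (List.mem_cons_of_mem a hi))]
    rw [List.length_cons, pow_succ, mul_neg_one, neg_smul, mul_smul_comm]
    rw [← mul_assoc]

lemma mul_algebraMap (x : ExtE N) (c : ℂ) : x * (algebraMap ℂ (ExtE N)) c = c • x := by
  rw [Algebra.algebraMap_eq_smul_one, mul_smul_comm, mul_one]

lemma D_pair (d : Module.Dual ℂ (Evec N)) (a b : Evec N) :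
    (D d) (ExteriorAlgebra.ι ℂ a * ExteriorAlgebra.ι ℂ b)
      = d a • ExteriorAlgebra.ι ℂ b - d b • ExteriorAlgebra.ι ℂ a := by
  rw [show (ExteriorAlgebra.ι ℂ a : ExtE N) = CliffordAlgebra.ι (0:QuadraticForm ℂ (Evec N)) a from rfl]
  rw [contractLeft_ι_mul, contractLeft_ι, mul_algebraMap]

lemma D_pair_mul (d : Module.Dual ℂ (Evec N)) (a b : Evec N) (y : ExtE N) :
    (D d) (ExteriorAlgebra.ι ℂ a * ExteriorAlgebra.ι ℂ b * y)
      = (D d) (ExteriorAlgebra.ι ℂ a * ExteriorAlgebra.ι ℂ b) * y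
        + ExteriorAlgebra.ι ℂ a * ExteriorAlgebra.ι ℂ b * (D d) y := by
  rw [D_pair, mul_assoc]
  rw [show (ExteriorAlgebra.ι ℂ a : ExtE N) = CliffordAlgebra.ι (0:QuadraticForm ℂ (Evec N)) a from rfl]
  rw [contractLeft_ι_mul]
  rw [show (ExteriorAlgebra.ι ℂ b : ExtE N) = CliffordAlgebra.ι (0:QuadraticForm ℂ (Evec N)) b from rfl]
  rw [contractLeft_ι_mul]
  rw [mul_sub, mul_smul_comm, sub_mul, smul_mul_assoc, smul_mul_assoc, mul_assoc]
  abel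

lemma D_mul_W (d : Module.Dual ℂ (Evec N)) (α : Matrix (Fin N) (Fin N) ℂ) (y : ExtE N) :
    (D d) (WW α * y) = (D d) (WW α) * y + WW α * (D d) y := by
  rw [WW]
  simp only [Finset.sum_mul, map_sum]
  rw [← Finset.sum_add_distrib]
  refine Finset.sum_congr rfl fun k _ => ?_
  rw [← Finset.sum_add_distrib]
  refine Finset.sum_congr rfl fun l _ => ?_
  rw [smul_mul_assoc, map_smul, map_smul, smul_mul_assoc, smul_mul_assoc, ← smul_add]
  exact congrArg _ (D_pair_mul d _ _ y)

lemma comm_ι_W (v : Evec N) (α : Matrix (Fin N) (Fin N) ℂ) :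
    ExteriorAlgebra.ι ℂ v * WW α = WW α * ExteriorAlgebra.ι ℂ v := by
  rw [WW, Finset.mul_sum, Finset.sum_mul]
  refine Finset.sum_congr rfl fun k _ => ?_
  rw [Finset.mul_sum, Finset.sum_mul]
  refine Finset.sum_congr rfl fun l _ => ?_
  rw [mul_smul_comm, smul_mul_assoc]
  congr 1
  have h1 : ExteriorAlgebra.ι ℂ v * ee k = -(ee k * ExteriorAlgebra.ι ℂ v) := anticomm _ _
  have h2 : ExteriorAlgebra.ι ℂ v * ee l = -(ee l * ExteriorAlgebra.ι ℂ v) := anticomm _ _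
  rw [← mul_assoc, h1, neg_mul, mul_assoc, h2, mul_neg, neg_neg, ← mul_assoc]

lemma D_W_pow (d : Module.Dual ℂ (Evec N)) (α : Matrix (Fin N) (Fin N) ℂ)
    (hcomm : WW α * (D d) (WW α) = (D d) (WW α) * WW α) (m : ℕ) :
    (D d) (WW α ^ (m+1)) = (m+1) • ((D d) (WW α) * WW α ^ m) := by
  induction m with
  | zero => rw [pow_one, pow_zero, mul_one, zero_add, one_smul]
  | succ m ih =>
    rw [pow_succ' (WW α) (m+1), D_mul_W, ih, mul_smul_comm]
    rw [← mul_assoc (WW α), hcomm, mul_assoc, ← pow_succ']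
    rw [succ_nsmul ((D d) (WW α) * WW α ^ (m+1)) (m+1), add_comm]

end SpinAux


namespace SpinAux
variable {N : ℕ}

lemma card_Pblock {p : ℕ} (hp : p ≤ N) :
    (Finset.univ.filter fun k : Fin N => k.1 < p).card = p := by
  have : (Finset.univ.filter fun k : Fin N => k.1 < p)
      = Finset.map (Fin.castLEEmb hp) Finset.univ := by
    ext k
    rw [Finset.mem_filter, Finset.mem_map]
    constructor
    · rintro ⟨-, hk⟩
      exact ⟨⟨k.1, hk⟩, Finset.mem_univ _, Fin.ext rfl⟩
    · rintro ⟨a, -, rfl⟩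
      exact ⟨Finset.mem_univ _, by simpa using a.isLt⟩
  rw [this, Finset.card_map, Finset.card_univ, Fintype.card_fin]

lemma fiber_eq {m : ℕ} :
    ((Finset.univ.filter fun I : Finset (Fin N) => Even I.card).filter
        fun I => I.card / 2 = m)
      = Finset.univ.filter fun I : Finset (Fin N) => I.card = 2*m := by
  ext I
  simp only [Finset.mem_filter, Finset.mem_univ, true_and]
  rw [Nat.even_iff]
  omega

lemma aH_eq (p : ℕ) (hp : p ≤ N) (α : Matrix (Fin N) (Fin N) ℂ)
    (hsupp : ∀ k j : Fin N, k.1 < p ∨ j.1 < p → α k j = 0) :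
    aH N p α = eI (Finset.univ.filter fun k : Fin N => k.1 < p)
      * (∑ m ∈ Finset.range (N+1), ((2:ℂ)^m * m.factorial)⁻¹ • WW α ^ m) := by
  set P := eI (Finset.univ.filter fun k : Fin N => k.1 < p) with hP
  have hterm : ∀ m : ℕ, P * (((2:ℂ)^m * m.factorial)⁻¹ • WW α ^ m)
      = ∑ I ∈ Finset.univ.filter (fun I : Finset (Fin N) => I.card = 2*m),
          pfSub α I • (P * eI I) := by
    intro m
    have hc : ((2:ℂ)^m * m.factorial) ≠ 0 := by
      apply mul_ne_zero (pow_ne_zero _ two_ne_zero)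
      exact_mod_cast Nat.cast_ne_zero.mpr m.factorial_ne_zero
    rw [W_pow_eq, Finset.smul_sum, Finset.mul_sum]
    refine Finset.sum_congr rfl fun I _ => ?_
    have hsc : ((2:ℂ)^m * m.factorial)⁻¹ * (((2:ℂ)^m * m.factorial) * pfSub α I) = pfSub α I := by
      field_simp
      exact mul_div_cancel_left₀ _ ((Nat.cast_ne_zero (R := ℂ)).mpr m.factorial_ne_zero)
    rw [smul_smul, hsc, mul_smul_comm]
  rw [Finset.mul_sum]
  simp_rw [hterm]
  have hLHS : aH N p α = ∑ I ∈ Finset.univ.filter (fun I : Finset (Fin N) => Even I.card),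
      pfSub α I • (P * eI I) := by
    rw [Finset.sum_filter, aH]
    refine Finset.sum_congr rfl fun I _ => ?_
    by_cases he : Even I.card
    · by_cases hall : ∀ i ∈ I, p ≤ i.1
      · rw [if_pos ⟨he, hall⟩, if_pos he]
      · rw [if_neg (by tauto), if_pos he]
        push_neg at hall
        obtain ⟨i, hiI, hip⟩ := hall
        rw [pfSub_zero α he hiI (fun y => hsupp i y (Or.inl hip))
          (fun x => hsupp x i (Or.inr hip)), zero_smul]
    · rw [if_neg (by tauto), if_neg he]
  rw [hLHS]
  rw [← Finset.sum_fiberwise_of_maps_to (g := fun I : Finset (Fin N) => I.card / 2)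
    (t := Finset.range (N+1))
    (fun I _ => by
      have : I.card ≤ N := by
        simpa using (Finset.card_le_univ I).trans_eq (by simp)
      simp only [Finset.mem_range]
      omega)]
  refine Finset.sum_congr rfl fun m _ => ?_
  rw [fiber_eq]

lemma toDualMap_single_apply (j : Fin N) (x : Evec N) :
    toDualMap N (Pi.single j 1) x = x j := by
  simp [toDualMap, Pi.single_apply]

local notation "D" => contractLeft (Q := (0:QuadraticForm ℂ (Evec N)))

lemma iota_fun_eq (α : Matrix (Fin N) (Fin N) ℂ) (j : Fin N) :
    ExteriorAlgebra.ι ℂ (fun k => α k j) = ∑ k, α k j • ee k := by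
  have : (fun k => α k j) = ∑ k : Fin N, α k j • (Pi.single k 1 : Evec N) := by
    funext l
    rw [Finset.sum_apply]
    simp [Pi.single_apply]
  rw [this, map_sum]
  refine Finset.sum_congr rfl fun k _ => ?_
  rw [map_smul]
  rfl

set_option maxHeartbeats 1000000 in
lemma D_WW_val (α : Matrix (Fin N) (Fin N) ℂ) (hskew : α.transpose = -α) (j : Fin N) :
    (D (toDualMap N (Pi.single j 1))) (WW α)
      = (-2:ℂ) • ExteriorAlgebra.ι ℂ (fun k => α k j) := by
  set d := toDualMap N (Pi.single j 1) with hd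
  have hdv : ∀ k : Fin N, d (Pi.single k 1) = if k = j then 1 else 0 := by
    intro k
    rw [hd, toDualMap_single_apply, Pi.single_apply]
    simp [eq_comm]
  rw [WW, map_sum]
  have hterm : ∀ k : Fin N, (D d) (∑ l, α k l • (ee k * ee l))
      = (∑ l, (if k = j then 1 else 0) * α k l • ee l) - α k j • ee k := by
    intro k
    rw [map_sum]
    have : ∀ l : Fin N, (D d) (α k l • (ee k * ee l))
        = (if k = j then 1 else 0) * α k l • ee l
          - (if l = j then α k l • ee k else 0) := by
      intro l
      rw [map_smul]
      rw [show (D d) (ee k * ee l)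
          = d (Pi.single k 1) • ee l - d (Pi.single l 1) • ee k from D_pair d _ _]
      rw [hdv, hdv, smul_sub, smul_smul, smul_smul]
      by_cases hk : k = j <;> by_cases hl : l = j <;> simp [hk, hl, mul_comm]
    simp_rw [this]
    rw [Finset.sum_sub_distrib]
    congr 1
    rw [Finset.sum_ite_eq' Finset.univ j (fun l => α k l • ee k)]
    simp
  simp_rw [hterm]
  rw [Finset.sum_sub_distrib]
  have h1 : (∑ k : Fin N, ∑ l, (if k = j then 1 else 0) * α k l • ee l)
      = ∑ l, α j l • ee l := by
    rw [Finset.sum_comm]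
    refine Finset.sum_congr rfl fun l _ => ?_
    rw [show (fun k => (if k = j then 1 else 0) * α k l • ee l)
        = fun k => (if k = j then α k l • ee l else 0) from funext fun k => by
          by_cases hk : k = j <;> simp [hk]]
    rw [Finset.sum_ite_eq' Finset.univ j (fun k => α k l • ee l)]
    simp
  rw [h1]
  have h2 : ∀ l : Fin N, α j l = -(α l j) := by
    intro l
    have := congrFun (congrFun hskew l) j
    simpa [Matrix.transpose_apply] using this
  rw [iota_fun_eq]
  rw [show (∑ l, α j l • ee l) = -(∑ l, α l j • ee l) from by
    rw [← Finset.sum_neg_distrib]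
    exact Finset.sum_congr rfl fun l _ => by rw [h2, neg_smul]]
  rw [Finset.smul_sum]
  rw [← Finset.sum_neg_distrib, ← Finset.sum_sub_distrib]
  refine Finset.sum_congr rfl fun l _ => ?_
  rw [smul_smul]
  rw [show (-2:ℂ) * α l j = -(α l j) - α l j from by ring]
  rw [sub_smul, neg_smul]


lemma eI_eq_list (I : Finset (Fin N)) : eI I = ((I.sort (· ≤ ·)).map ee).prod := rfl

lemma W_pow_N_zero (α : Matrix (Fin N) (Fin N) ℂ) (hN : 1 ≤ N) :
    WW α ^ N = 0 := by
  rw [W_pow_eq]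
  apply Finset.sum_eq_zero
  intro I hI
  have h1 : I.card = 2*N := (Finset.mem_filter.mp hI).2
  have h2 : I.card ≤ N := by
    simpa using (Finset.card_le_univ I).trans_eq (by simp)
  omega

end SpinAux

set_option maxHeartbeats 2000000 in
/-- Let `H ⊆ V = E ⊕ E^∨` be the maximal isotropic subspace spanned by
`e_1, …, e_p` and `g_j = f_j + ∑_{k > p} α_{kj} e_k` (`j > p`), with `α` skew-symmetric
supported on `{p+1,…,N}`.  Then the spinor
`a_H = ∑_I Pf(α_I) e_{[p]} ∧ e_I` is annihilated by Clifford multiplication by every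
element of `H`. -/
theorem stmt2 (N p : ℕ) (hp : p ≤ N) (hNe : Even N) (hpe : Even p)
    (α : Matrix (Fin N) (Fin N) ℂ) (hskew : α.transpose = -α)
    (hsupp : ∀ k j : Fin N, k.1 < p ∨ j.1 < p → α k j = 0) :
    ∀ h ∈ Submodule.span ℂ
      ({v : Vsp N | ∃ i : Fin N, i.1 < p ∧ v = (Pi.single i 1, 0)} ∪
       {v : Vsp N | ∃ j : Fin N, p ≤ j.1 ∧ v = ((fun k => α k j), Pi.single j 1)}),
      psi (aH N p α) h = 0 := by
  classical
  intro h hh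
  set P := eI (Finset.univ.filter fun k : Fin N => k.1 < p) with hPdef
  have hsort : ∀ i : Fin N, i.1 < p →
      i ∈ (Finset.univ.filter fun k : Fin N => k.1 < p).sort (· ≤ ·) := by
    intro i hip
    rw [Finset.mem_sort]
    exact Finset.mem_filter.mpr ⟨Finset.mem_univ _, hip⟩
  have hlen : ((Finset.univ.filter fun k : Fin N => k.1 < p).sort (· ≤ ·)).length = p := by
    rw [Finset.length_sort, SpinAux.card_Pblock hp]
  have hker : Submodule.span ℂ
      ({v : Vsp N | ∃ i : Fin N, i.1 < p ∧ v = (Pi.single i 1, 0)} ∪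
       {v : Vsp N | ∃ j : Fin N, p ≤ j.1 ∧ v = ((fun k => α k j), Pi.single j 1)})
      ≤ LinearMap.ker (psi (aH N p α)) := by
    rw [Submodule.span_le]
    rintro v (⟨i, hip, rfl⟩ | ⟨j, hjp, rfl⟩)
    · rw [SetLike.mem_coe, LinearMap.mem_ker]
      show ExteriorAlgebra.ι ℂ (Pi.single i 1) * aH N p α
        + contractLeft (Q := (0:QuadraticForm ℂ (Evec N))) (toDualMap N 0) (aH N p α) = 0
      rw [map_zero (toDualMap N), map_zero (contractLeft (Q := (0:QuadraticForm ℂ (Evec N)))),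
        LinearMap.zero_apply, add_zero]
      rw [SpinAux.aH_eq p hp α hsupp, ← hPdef, ← mul_assoc, hPdef, SpinAux.eI_eq_list,
        SpinAux.ee_mul_list (hsort i hip), zero_mul]
    · rw [SetLike.mem_coe, LinearMap.mem_ker]
      show ExteriorAlgebra.ι ℂ (fun k => α k j) * aH N p α
        + contractLeft (Q := (0:QuadraticForm ℂ (Evec N))) (toDualMap N (Pi.single j 1))
            (aH N p α) = 0
      set u : Evec N := fun k => α k j with hu
      set d : Module.Dual ℂ (Evec N) := toDualMap N (Pi.single j 1) with hd
      set c : ℕ → ℂ := fun m => ((2:ℂ)^m * m.factorial) with hc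
      have hcne : ∀ m : ℕ, c m ≠ 0 := by
        intro m
        apply mul_ne_zero (pow_ne_zero _ two_ne_zero)
        exact_mod_cast Nat.cast_ne_zero.mpr m.factorial_ne_zero
      set S : ExtE N := ∑ m ∈ Finset.range (N+1), (c m)⁻¹ • SpinAux.WW α ^ m with hS
      have hN1 : 1 ≤ N := lt_of_le_of_lt (Nat.zero_le _) j.2
      have hWN := SpinAux.W_pow_N_zero α hN1
      have hDW : contractLeft (Q := (0:QuadraticForm ℂ (Evec N))) d (SpinAux.WW α)
          = (-2:ℂ) • ExteriorAlgebra.ι ℂ u := SpinAux.D_WW_val α hskew j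
      have hcomm : SpinAux.WW α * contractLeft (Q := (0:QuadraticForm ℂ (Evec N))) d (SpinAux.WW α)
          = contractLeft (Q := (0:QuadraticForm ℂ (Evec N))) d (SpinAux.WW α) * SpinAux.WW α := by
        rw [hDW, mul_smul_comm, smul_mul_assoc, SpinAux.comm_ι_W]
      have hDS : contractLeft (Q := (0:QuadraticForm ℂ (Evec N))) d S
          = -(ExteriorAlgebra.ι ℂ u * ∑ m ∈ Finset.range N, (c m)⁻¹ • SpinAux.WW α ^ m) := by
        rw [hS, map_sum, Finset.sum_range_succ']
        have hf0 : contractLeft (Q := (0:QuadraticForm ℂ (Evec N))) d ((c 0)⁻¹ • SpinAux.WW α ^ 0) = 0 := by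
          rw [pow_zero, map_smul, contractLeft_one, smul_zero]
        rw [hf0, add_zero, Finset.mul_sum, ← Finset.sum_neg_distrib]
        refine Finset.sum_congr rfl fun m _ => ?_
        rw [map_smul, SpinAux.D_W_pow d α hcomm m, hDW]
        rw [smul_mul_assoc, ← Nat.cast_smul_eq_nsmul ℂ, smul_smul, smul_smul]
        rw [mul_smul_comm, ← neg_smul]
        congr 1
        have hm1 : ((m:ℂ)+1) ≠ 0 := Nat.cast_add_one_ne_zero m
        have h2 : ((2:ℂ)^m) ≠ 0 := pow_ne_zero _ two_ne_zero
        have hf : ((m.factorial:ℂ)) ≠ 0 := by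
          exact_mod_cast Nat.cast_ne_zero.mpr m.factorial_ne_zero
        rw [hc]
        simp only
        rw [Nat.factorial_succ, pow_succ]
        push_cast
        field_simp
      have hStrunc : S = ∑ m ∈ Finset.range N, (c m)⁻¹ • SpinAux.WW α ^ m := by
        rw [hS, Finset.sum_range_succ, hWN, smul_zero, add_zero]
      have hkey : ExteriorAlgebra.ι ℂ u * S
          + contractLeft (Q := (0:QuadraticForm ℂ (Evec N))) d S = 0 := by
        rw [hDS, hStrunc]
        exact add_neg_cancel _
      have haH : aH N p α = P * S := SpinAux.aH_eq p hp α hsupp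
      have hdz : ∀ i ∈ (Finset.univ.filter fun k : Fin N => k.1 < p).sort (· ≤ ·),
          d (Pi.single i 1) = 0 := by
        intro i hi
        have hip : i.1 < p := (Finset.mem_filter.mp ((Finset.mem_sort _).mp hi)).2
        rw [hd, SpinAux.toDualMap_single_apply, Pi.single_apply, if_neg]
        intro hji
        rw [← hji] at hip
        omega
      have hP0 : ExteriorAlgebra.ι ℂ u * (P * S) = P * (ExteriorAlgebra.ι ℂ u * S) := by
        rw [← mul_assoc, hPdef, SpinAux.eI_eq_list, SpinAux.mul_list_comm, hlen,
          Even.neg_one_pow hpe, one_smul, mul_assoc]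
      have hP1 : contractLeft (Q := (0:QuadraticForm ℂ (Evec N))) d (P * S)
          = P * contractLeft (Q := (0:QuadraticForm ℂ (Evec N))) d S := by
        rw [hPdef, SpinAux.eI_eq_list, SpinAux.contract_list d _ hdz, hlen,
          Even.neg_one_pow hpe, one_smul]
      rw [haH, hP0, hP1, ← mul_add, hkey, mul_zero]
  exact LinearMap.mem_ker.mp (hker hh)
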